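/- [Convergence of the IsoMuSh algorithm] Let (U_t)_{t≥0} be a sequence in 𝒫 and (Q_t)_{t≥0} a sequence in 𝕆 such that for every t ≥ 0: (i) ⟨ΦQ_tQ_tᵀΦᵀU_t, V⟩ ≤ ⟨ΦQ_tQ_tᵀΦᵀU_t, U_{t+1}⟩ for all V ∈ 𝒫, and (ii) ⟨ΦᵀU_{t+1}U_{t+1}ᵀΦQ_t, Y⟩ ≤ ⟨ΦᵀU_{t+1}U_{t+1}ᵀΦQ_t, Q_{t+1}⟩ for all Y ∈ 𝕆. Then the sequence of objective values (f(U_t, Q_t))_{t≥0} is monotonically nondecreasing and converges to a finite limit. -/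
import Mathlib


open Matrix BigOperators Filter

noncomputable section

/-- Frobenius inner product of two real matrices of the same size. -/
def frob {α β : Type*} [Fintype α] [Fintype β] (A B : Matrix α β ℝ) : ℝ :=
  ∑ u, ∑ v, A u v * B u v

/-- The set 𝒫: blockwise partial permutation matrices. Rows indexed by pairs (i,r),
1 ≤ i ≤ k, 1 ≤ r ≤ m i; columns by Fin d. Entries in {0,1}, exactly one 1 per row,
each block column sum at most 1. -/
def isP {k : ℕ} (d : ℕ) (m : Fin k → ℕ)
    (U : Matrix (Σ i : Fin k, Fin (m i)) (Fin d) ℝ) : Prop :=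
  (∀ u v, U u v = 0 ∨ U u v = 1) ∧
  (∀ u, ∃! v, U u v = 1) ∧
  (∀ (i : Fin k) (c : Fin d), ∑ r : Fin (m i), U ⟨i, r⟩ c ≤ 1)

/-- The set 𝕆: block-orthogonal matrices; each b×b block is orthogonal. -/
def isO (k b : ℕ) (Q : Matrix (Fin k × Fin b) (Fin b) ℝ) : Prop :=
  ∀ i : Fin k,
    (Matrix.of fun s t => Q (i, s) t) * (Matrix.of fun s t => Q (i, s) t)ᵀ =
      (1 : Matrix (Fin b) (Fin b) ℝ)

/-- Φ is block-diagonal: entries with mismatched block indices vanish. -/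
def isBlockDiag {k : ℕ} (m : Fin k → ℕ) (b : ℕ)
    (Φ : Matrix (Σ i : Fin k, Fin (m i)) (Fin k × Fin b) ℝ) : Prop :=
  ∀ (i : Fin k) (r : Fin (m i)) (j : Fin k) (s : Fin b), i ≠ j → Φ ⟨i, r⟩ (j, s) = 0

/-- The objective f(U,Q) = ⟨UᵀΦQ, UᵀΦQ⟩. -/
def obj {k b d : ℕ} (m : Fin k → ℕ)
    (Φ : Matrix (Σ i : Fin k, Fin (m i)) (Fin k × Fin b) ℝ)
    (U : Matrix (Σ i : Fin k, Fin (m i)) (Fin d) ℝ)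
    (Q : Matrix (Fin k × Fin b) (Fin b) ℝ) : ℝ :=
  frob (Uᵀ * Φ * Q) (Uᵀ * Φ * Q)


section helpers

lemma frob_eq_trace {α β : Type*} [Fintype α] [Fintype β] [DecidableEq β]
    (A B : Matrix α β ℝ) : frob A B = (Aᵀ * B).trace := by
  simp only [frob, Matrix.trace, Matrix.diag, Matrix.mul_apply, Matrix.transpose_apply]
  rw [Finset.sum_comm]

lemma frob_nonneg {α β : Type*} [Fintype α] [Fintype β] (A : Matrix α β ℝ) :
    0 ≤ frob A A :=
  Finset.sum_nonneg fun _ _ => Finset.sum_nonneg fun _ _ => mul_self_nonneg _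

lemma frob_cs {α β : Type*} [Fintype α] [Fintype β] (A B : Matrix α β ℝ) :
    (frob A B)^2 ≤ frob A A * frob B B := by
  have h : ∀ C D : Matrix α β ℝ, frob C D = ∑ p : α × β, C p.1 p.2 * D p.1 p.2 := by
    intro C D
    rw [frob]; exact (Fintype.sum_prod_type (fun p : α × β => C p.1 p.2 * D p.1 p.2)).symm
  rw [h, h, h]
  have := Finset.sum_mul_sq_le_sq_mul_sq Finset.univ (fun p : α × β => A p.1 p.2)
      (fun p : α × β => B p.1 p.2)
  simpa [sq] using this

lemma frob_step {α β : Type*} [Fintype α] [Fintype β] {A B : Matrix α β ℝ}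
    (h : frob A A ≤ frob A B) : frob A A ≤ frob B B := by
  nlinarith [frob_cs A B, frob_nonneg A, frob_nonneg B]

set_option linter.unusedSectionVars false in
lemma key1 {ι κ μ ν : Type*} [Fintype ι] [Fintype κ] [Fintype μ] [Fintype ν]
    [DecidableEq μ] [DecidableEq ν]
    (Φ : Matrix ι κ ℝ) (Uc V : Matrix ι μ ℝ) (Qc : Matrix κ ν ℝ) :
    frob (Φ * Qc * Qcᵀ * Φᵀ * Uc) V = frob (Ucᵀ * Φ * Qc) (Vᵀ * Φ * Qc) := by
  rw [frob_eq_trace, frob_eq_trace]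
  rw [← Matrix.trace_transpose ((Φ * Qc * Qcᵀ * Φᵀ * Uc)ᵀ * V)]
  rw [Matrix.trace_mul_comm ((Ucᵀ * Φ * Qc)ᵀ) (Vᵀ * Φ * Qc)]
  simp only [Matrix.transpose_mul, Matrix.transpose_transpose, Matrix.mul_assoc]

set_option linter.unusedSectionVars false in
lemma key2 {ι κ μ ν : Type*} [Fintype ι] [Fintype κ] [Fintype μ] [Fintype ν]
    [DecidableEq μ] [DecidableEq ν]
    (Φ : Matrix ι κ ℝ) (Uc : Matrix ι μ ℝ) (Qc Y : Matrix κ ν ℝ) :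
    frob (Φᵀ * Uc * Ucᵀ * Φ * Qc) Y = frob (Ucᵀ * Φ * Qc) (Ucᵀ * Φ * Y) := by
  rw [frob_eq_trace, frob_eq_trace]
  simp only [Matrix.transpose_mul, Matrix.transpose_transpose, Matrix.mul_assoc]

lemma Q_entry_le {k b : ℕ} {Q : Matrix (Fin k × Fin b) (Fin b) ℝ} (hQ : isO k b Q)
    (p : Fin k × Fin b) (t : Fin b) : |Q p t| ≤ 1 := by
  obtain ⟨i, s⟩ := p
  have h := congrFun (congrFun (hQ i) s) s
  simp only [Matrix.mul_apply, Matrix.transpose_apply, Matrix.of_apply,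
    Matrix.one_apply_eq] at h
  have h2 : Q (i, s) t * Q (i, s) t ≤ 1 := by
    rw [← h]
    exact Finset.single_le_sum (f := fun j => Q (i,s) j * Q (i,s) j)
      (fun j _ => mul_self_nonneg _) (Finset.mem_univ t)
  exact abs_le_one_iff_mul_self_le_one.mpr h2

lemma obj_bdd {k b d : ℕ} (m : Fin k → ℕ)
    (Φ : Matrix (Σ i : Fin k, Fin (m i)) (Fin k × Fin b) ℝ)
    (U : Matrix (Σ i : Fin k, Fin (m i)) (Fin d) ℝ)
    (Q : Matrix (Fin k × Fin b) (Fin b) ℝ)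
    (hU : isP d m U) (hQ : isO k b Q) :
    frob (Uᵀ * Φ * Q) (Uᵀ * Φ * Q) ≤
      (d * b : ℝ) * (∑ u, ∑ p, |Φ u p|)^2 := by
  set M : ℝ := ∑ u, ∑ p, |Φ u p| with hM
  have hMnn : 0 ≤ M := Finset.sum_nonneg fun _ _ => Finset.sum_nonneg fun _ _ => abs_nonneg _
  have hUle : ∀ u v, |U u v| ≤ 1 := by
    intro u v; rcases hU.1 u v with h | h <;> simp [h]
  have hentry : ∀ (c : Fin d) (t : Fin b), |(Uᵀ * Φ * Q) c t| ≤ M := by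
    intro c t
    have he : (Uᵀ * Φ * Q) c t = ∑ p, ∑ u, U u c * Φ u p * Q p t := by
      simp only [Matrix.mul_apply, Matrix.transpose_apply, Finset.sum_mul]
    rw [he]
    calc |∑ p, ∑ u, U u c * Φ u p * Q p t|
        ≤ ∑ p, ∑ u, |U u c * Φ u p * Q p t| := by
          refine (Finset.abs_sum_le_sum_abs _ _).trans ?_
          exact Finset.sum_le_sum fun p _ => Finset.abs_sum_le_sum_abs _ _
      _ ≤ ∑ p, ∑ u, |Φ u p| := by
          refine Finset.sum_le_sum fun p _ => Finset.sum_le_sum fun u _ => ?_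
          rw [abs_mul, abs_mul]
          calc |U u c| * |Φ u p| * |Q p t| ≤ 1 * |Φ u p| * 1 := by
                apply mul_le_mul (mul_le_mul (hUle u c) le_rfl (abs_nonneg _) zero_le_one)
                  (Q_entry_le hQ p t) (abs_nonneg _)
                positivity
            _ = |Φ u p| := by ring
      _ = M := by rw [hM]; exact Finset.sum_comm
  have : frob (Uᵀ * Φ * Q) (Uᵀ * Φ * Q) ≤ ∑ _c : Fin d, ∑ _t : Fin b, M^2 := by
    refine Finset.sum_le_sum fun c _ => Finset.sum_le_sum fun t _ => ?_
    have := hentry c t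
    nlinarith [abs_nonneg ((Uᵀ * Φ * Q) c t), sq_abs ((Uᵀ * Φ * Q) c t)]
  simpa [Finset.sum_const, mul_assoc] using this

end helpers

theorem isomush_convergence (k b d : ℕ) (hk : 0 < k) (hb : 0 < b) (hd : 0 < d)
    (m : Fin k → ℕ) (hm : ∀ i, 0 < m i)
    (Φ : Matrix (Σ i : Fin k, Fin (m i)) (Fin k × Fin b) ℝ) (hΦ : isBlockDiag m b Φ)
    (U : ℕ → Matrix (Σ i : Fin k, Fin (m i)) (Fin d) ℝ)
    (Q : ℕ → Matrix (Fin k × Fin b) (Fin b) ℝ)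
    (hU : ∀ t, isP d m (U t)) (hQ : ∀ t, isO k b (Q t))
    (hUstep : ∀ t, ∀ V, isP d m V →
      frob (Φ * Q t * (Q t)ᵀ * Φᵀ * U t) V ≤
        frob (Φ * Q t * (Q t)ᵀ * Φᵀ * U t) (U (t + 1)))
    (hQstep : ∀ t, ∀ Y, isO k b Y →
      frob (Φᵀ * U (t + 1) * (U (t + 1))ᵀ * Φ * Q t) Y ≤
        frob (Φᵀ * U (t + 1) * (U (t + 1))ᵀ * Φ * Q t) (Q (t + 1))) :
    Monotone (fun t => obj m Φ (U t) (Q t)) ∧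
      ∃ L : ℝ, Tendsto (fun t => obj m Φ (U t) (Q t)) atTop (nhds L) := by
  simp only [obj]
  have mono : Monotone (fun t => frob ((U t)ᵀ * Φ * Q t) ((U t)ᵀ * Φ * Q t)) := by
    apply monotone_nat_of_le_succ
    intro t
    have h1 : frob ((U t)ᵀ * Φ * Q t) ((U t)ᵀ * Φ * Q t) ≤
        frob ((U t)ᵀ * Φ * Q t) ((U (t+1))ᵀ * Φ * Q t) := by
      have := hUstep t (U t) (hU t)
      rwa [key1, key1] at this
    have h2 := frob_step h1
    have h3 : frob ((U (t+1))ᵀ * Φ * Q t) ((U (t+1))ᵀ * Φ * Q t) ≤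
        frob ((U (t+1))ᵀ * Φ * Q t) ((U (t+1))ᵀ * Φ * Q (t+1)) := by
      have := hQstep t (Q t) (hQ t)
      rwa [key2, key2] at this
    exact h2.trans (frob_step h3)
  refine ⟨mono, ?_⟩
  refine ⟨_, tendsto_atTop_ciSup mono ⟨(d * b : ℝ) * (∑ u, ∑ p, |Φ u p|)^2, ?_⟩⟩
  rintro x ⟨t, rfl⟩
  exact obj_bdd m Φ (U t) (Q t) (hU t) (hQ t)
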